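/- Let $K$ be a compact Hausdorff space, $E$ a Banach space, and $X$ a $C(K,E)$-superspace. If $K$ has no isolated points, then for all $f, g \in X$ with $\|f\| = \|g\| = 1$ and every $\varepsilon > 0$, the zero function lies in the closed convex hull of the set $D(f,g,\varepsilon) \cap C(K,E)$, where $D(f,g,\varepsilon) = \{h \in X : \|f+g+h\| > 2-\varepsilon \text{ and } \|g+h\| < 1+\varepsilon\}$. -/

import Mathlib

open scoped ENNReal

/-- `X` is a `C(K,E)`-superspace: a subspace of the bounded `E`-valued functions on `K`
(with sup norm) containing all continuous functions, such that every element of `X` is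
large and almost constant on suitable open sets. -/
def IsCKESuperspace {K : Type*} [TopologicalSpace K] {E : Type*} [NormedAddCommGroup E]
    [NormedSpace ℝ E] (X : Submodule ℝ (lp (fun _ : K => E) ∞)) : Prop :=
  (∀ f : lp (fun _ : K => E) ∞, Continuous (fun t => f t) → f ∈ X) ∧
  (∀ f ∈ X, ∀ ε > (0 : ℝ), ∀ U : Set K, IsOpen U → U.Nonempty →
    ∃ e : E, (1 - ε) * (⨆ t ∈ U, ‖f t‖) < ‖e‖ ∧
      ∃ V : Set K, IsOpen V ∧ V.Nonempty ∧ V ⊆ U ∧ ∀ τ ∈ V, ‖e - f τ‖ < ε)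

lemma split_open_aux {K : Type*} [TopologicalSpace K] [T2Space K]
    (hperfect : ∀ x : K, ¬ IsOpen ({x} : Set K)) {V : Set K} (hV : IsOpen V) (hne : V.Nonempty) :
    ∃ A B : Set K, IsOpen A ∧ IsOpen B ∧ A.Nonempty ∧ B.Nonempty ∧ A ⊆ V ∧ B ⊆ V ∧ Disjoint A B := by
  obtain ⟨t, ht⟩ := hne
  have : ∃ s ∈ V, s ≠ t := by
    by_contra h
    push_neg at h
    exact hperfect t ((Set.eq_singleton_iff_unique_mem.mpr ⟨ht, h⟩) ▸ hV)
  obtain ⟨s, hsV, hst⟩ := this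
  obtain ⟨U2, U1, hU2, hU1, hsU2, htU1, hdisj⟩ := t2_separation hst
  exact ⟨V ∩ U1, V ∩ U2, hV.inter hU1, hV.inter hU2, ⟨t, ht, htU1⟩, ⟨s, hsV, hsU2⟩,
    Set.inter_subset_left, Set.inter_subset_left,
    (hdisj.symm.mono Set.inter_subset_right Set.inter_subset_right)⟩

lemma disjoint_opens_aux {K : Type*} [TopologicalSpace K] [T2Space K]
    (hperfect : ∀ x : K, ¬ IsOpen ({x} : Set K)) :
    ∀ (n : ℕ) (V : Set K), IsOpen V → V.Nonempty →
      ∃ W : Fin (n+1) → Set K, (∀ i, IsOpen (W i)) ∧ (∀ i, (W i).Nonempty) ∧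
        (∀ i, W i ⊆ V) ∧ ∀ i j, i ≠ j → Disjoint (W i) (W j) := by
  intro n
  induction n with
  | zero =>
    intro V hV hne
    refine ⟨fun _ => V, fun _ => hV, fun _ => hne, fun _ => le_refl _, fun i j hij => ?_⟩
    exact absurd (Fin.ext (by omega)) hij
  | succ n ih =>
    intro V hV hne
    obtain ⟨A, B, hA, hB, hAne, hBne, hAV, hBV, hAB⟩ := split_open_aux hperfect hV hne
    obtain ⟨W, hWo, hWne, hWA, hWd⟩ := ih A hA hAne
    refine ⟨Fin.cons B W, ?_, ?_, ?_, ?_⟩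
    · intro i
      refine Fin.cases ?_ ?_ i
      · simpa using hB
      · intro j; simpa using hWo j
    · intro i
      refine Fin.cases ?_ ?_ i
      · simpa using hBne
      · intro j; simpa using hWne j
    · intro i
      refine Fin.cases ?_ ?_ i
      · simpa using hBV
      · intro j; simpa using (hWA j).trans hAV
    · intro i j hij
      induction i using Fin.cases with
      | zero =>
        induction j using Fin.cases with
        | zero => exact absurd rfl hij
        | succ j' => simpa using hAB.symm.mono_right (hWA j')
      | succ i' =>
        induction j using Fin.cases with
        | zero => simpa using (hAB.symm.mono_right (hWA i')).symm
        | succ j' =>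
          have hne' : i' ≠ j' := fun h => hij (by rw [h])
          simpa using hWd i' j' hne'

set_option maxHeartbeats 1000000 in
theorem stmt10 {K : Type*} [TopologicalSpace K] [CompactSpace K] [T2Space K]
    {E : Type*} [NormedAddCommGroup E] [NormedSpace ℝ E] [CompleteSpace E]
    (X : Submodule ℝ (lp (fun _ : K => E) ∞)) (hX : IsCKESuperspace X)
    (hperfect : ∀ x : K, ¬ IsOpen ({x} : Set K))
    (f g : lp (fun _ : K => E) ∞) (hf : f ∈ X) (hg : g ∈ X)
    (hf1 : ‖f‖ = 1) (hg1 : ‖g‖ = 1) (ε : ℝ) (hε : 0 < ε) :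
    (0 : lp (fun _ : K => E) ∞) ∈ closure (convexHull ℝ
      ({h | h ∈ X ∧ 2 - ε < ‖f + g + h‖ ∧ ‖g + h‖ < 1 + ε} ∩
       {h | Continuous (fun t => h t)})) := by
  classical
  have hKne : Nonempty K := by
    by_contra h
    rw [not_nonempty_iff] at h
    have h0 : ‖f‖ = 0 := by rw [lp.norm_eq_ciSup]; exact Real.iSup_of_isEmpty _
    rw [hf1] at h0; norm_num at h0
  set ε' : ℝ := min (ε/4) (2⁻¹) with hε'def
  have hε'pos : 0 < ε' := lt_min (by linarith) (by norm_num)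
  have hε'le : ε' ≤ ε/4 := min_le_left _ _
  have hε'half : ε' ≤ 2⁻¹ := min_le_right _ _
  have hsup : (⨆ t ∈ (Set.univ : Set K), ‖f t‖) = 1 := by
    have h1 : (⨆ t ∈ (Set.univ : Set K), ‖f t‖) = ⨆ t : K, ‖f t‖ :=
      iSup_congr fun t => ciSup_pos (Set.mem_univ t)
    rw [h1, ← lp.norm_eq_ciSup, hf1]
  obtain ⟨ef, hef, V1, hV1o, hV1ne, -, hfV1⟩ :=
    hX.2 f hf ε' hε'pos Set.univ isOpen_univ Set.univ_nonempty
  rw [hsup, mul_one] at hef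
  obtain ⟨eg, -, V2, hV2o, hV2ne, hV21, hgV2⟩ := hX.2 g hg ε' hε'pos V1 hV1o hV1ne
  have hefpos : 0 < ‖ef‖ := by
    have : (0:ℝ) < 1 - ε' := by
      have : (2:ℝ)⁻¹ < 1 := by norm_num
      linarith
    linarith
  set c : ℝ := (1 - ε') / ‖ef‖ with hcdef
  have hc : c * ‖ef‖ = 1 - ε' := div_mul_cancel₀ _ (ne_of_gt hefpos)
  have hcpos : 0 < c := div_pos (by nlinarith) hefpos
  set e : E := c • ef - eg with hedef
  obtain ⟨τ₀, hτ₀⟩ := id hV2ne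
  have hgle : ∀ t : K, ‖g t‖ ≤ 1 := fun t => by
    simpa [hg1] using lp.norm_apply_le_norm ENNReal.top_ne_zero g t
  have hegle : ‖eg‖ ≤ 1 + ε' := by
    have h1 : ‖eg‖ ≤ ‖eg - g τ₀‖ + ‖g τ₀‖ := by
      simpa using norm_add_le (eg - g τ₀) (g τ₀)
    have h2 := hgV2 τ₀ hτ₀
    linarith [hgle τ₀]
  have hele : ‖e‖ ≤ 2 := by
    have h1 : ‖e‖ ≤ ‖c • ef‖ + ‖eg‖ := norm_sub_le _ _
    rw [norm_smul, Real.norm_of_nonneg hcpos.le] at h1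
    linarith
  rw [Metric.mem_closure_iff]
  intro δ hδ
  obtain ⟨n, hn⟩ := exists_nat_gt (2/δ)
  obtain ⟨W, hWo, hWne, hWV2, hWd⟩ := disjoint_opens_aux hperfect n V2 hV2o hV2ne
  choose tp htp using hWne
  have hφex : ∀ i : Fin (n+1), ∃ φ : C(K, ℝ), Set.EqOn φ 0 (W i)ᶜ ∧ Set.EqOn φ 1 {tp i} ∧
      ∀ x, φ x ∈ Set.Icc (0:ℝ) 1 := fun i =>
    exists_continuous_zero_one_of_isClosed (hWo i).isClosed_compl isClosed_singleton
      (by simp [Set.disjoint_singleton_right, htp i])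
  choose φ hφ0 hφ1 hφicc using hφex
  set hh : Fin (n+1) → lp (fun _ : K => E) ∞ := fun i =>
    ⟨fun t => φ i t • e, memℓp_infty ⟨‖e‖, by
      rintro x ⟨t, rfl⟩
      have h01 := hφicc i t
      simp only [norm_smul, Real.norm_of_nonneg h01.1]
      exact mul_le_of_le_one_left (norm_nonneg e) h01.2⟩⟩ with hhdef
  have happly : ∀ i (t : K), hh i t = φ i t • e := fun i t => rfl
  have hcont : ∀ i, Continuous (fun t : K => hh i t) := by
    intro i
    have heq : (fun t : K => hh i t) = fun t => φ i t • e := rfl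
    rw [heq]
    exact ((φ i).continuous).smul continuous_const
  have hDmem : ∀ i, hh i ∈ (({h | h ∈ X ∧ 2 - ε < ‖f + g + h‖ ∧ ‖g + h‖ < 1 + ε} ∩
       {h | Continuous (fun t => h t)}) : Set (lp (fun _ : K => E) ∞)) := by
    intro i
    have hWsub : W i ⊆ V2 := hWV2 i
    refine ⟨⟨hX.1 _ (hcont i), ?_, ?_⟩, hcont i⟩
    · -- 2 - ε < ‖f + g + hh i‖
      have ht0W : tp i ∈ W i := htp i
      have ht0V2 : tp i ∈ V2 := hWsub ht0W
      have ht0V1 : tp i ∈ V1 := hV21 ht0V2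
      have hφ1' : φ i (tp i) = 1 := by simpa using hφ1 i (Set.mem_singleton (tp i))
      have happ : (f + g + hh i) (tp i) = f (tp i) + g (tp i) + e := by
        simp only [lp.coeFn_add, Pi.add_apply, happly, hφ1', one_smul]
      have hle : ‖(f + g + hh i) (tp i)‖ ≤ ‖f + g + hh i‖ :=
        lp.norm_apply_le_norm ENNReal.top_ne_zero _ _
      rw [happ] at hle
      have hid : (1+c)•ef = (f (tp i) + g (tp i) + e) + (ef - f (tp i)) + (eg - g (tp i)) := by
        rw [hedef]; module
      have h2 : ‖(1+c)•ef‖ ≤ ‖f (tp i) + g (tp i) + e‖ + ‖ef - f (tp i)‖ + ‖eg - g (tp i)‖ := by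
        rw [hid]; exact norm_add₃_le
      have h3 : ‖(1+c)•ef‖ = ‖ef‖ + (1 - ε') := by
        rw [norm_smul, Real.norm_of_nonneg (by linarith : (0:ℝ) ≤ 1 + c), add_mul, one_mul, hc]
      have h4 := hfV1 (tp i) ht0V1
      have h5 := hgV2 (tp i) ht0V2
      have : 2 - ε < ‖f (tp i) + g (tp i) + e‖ := by linarith
      linarith
    · -- ‖g + hh i‖ < 1 + ε
      have hbound : ∀ t : K, ‖(g + hh i) t‖ ≤ 1 + 2*ε' := by
        intro t
        have happ : (g + hh i) t = g t + φ i t • e := by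
          simp only [lp.coeFn_add, Pi.add_apply, happly]
        rw [happ]
        by_cases htW : t ∈ W i
        · have htV2 : t ∈ V2 := hWsub htW
          have h01 := hφicc i t
          have hid2 : g t + φ i t • e = (g t - eg) + ((1 - φ i t) • eg + (φ i t * c) • ef) := by
            rw [hedef]; module
          rw [hid2]
          have h6 : ‖(g t - eg) + ((1 - φ i t) • eg + (φ i t * c) • ef)‖ ≤
              ‖g t - eg‖ + (‖(1 - φ i t) • eg‖ + ‖(φ i t * c) • ef‖) :=
            (norm_add_le _ _).trans (add_le_add le_rfl (norm_add_le _ _))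
          have e1 : ‖(1 - φ i t) • eg‖ = (1 - φ i t) * ‖eg‖ := by
            rw [norm_smul, Real.norm_of_nonneg (by linarith [h01.2])]
          have e2 : ‖(φ i t * c) • ef‖ = φ i t * (1 - ε') := by
            rw [norm_smul, Real.norm_of_nonneg (mul_nonneg h01.1 hcpos.le), mul_assoc, hc]
          have h7 : ‖g t - eg‖ < ε' := by
            have h8 := hgV2 t htV2
            rwa [norm_sub_rev] at h8
          rw [e1, e2] at h6
          have k1 : (1 - φ i t) * ‖eg‖ ≤ (1 - φ i t) * (1 + ε') :=
            mul_le_mul_of_nonneg_left hegle (by linarith [h01.2])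
          have k2 : (0:ℝ) ≤ φ i t * ε' := mul_nonneg h01.1 hε'pos.le
          nlinarith [h6, h7, k1, k2, h01.1, h01.2]
        · have h0 : φ i t = 0 := by simpa using hφ0 i htW
          rw [h0, zero_smul, add_zero]
          linarith [hgle t]
      have hle := lp.norm_le_of_forall_le (by linarith : (0:ℝ) ≤ 1 + 2*ε') hbound
      linarith
  set b : lp (fun _ : K => E) ∞ := ∑ i : Fin (n+1), ((n:ℝ)+1)⁻¹ • hh i with hbdef
  refine ⟨b, ?_, ?_⟩
  · refine (convex_convexHull ℝ _).sum_mem (fun i _ => by positivity) ?_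
      (fun i _ => subset_convexHull ℝ _ (hDmem i))
    simp [Finset.sum_const]
    rw [mul_inv_cancel₀]
    positivity
  · rw [dist_zero_left]
    have hball : ∀ t : K, ‖b t‖ ≤ ((n:ℝ)+1)⁻¹ * 2 := by
      intro t
      have happb : b t = (((n:ℝ)+1)⁻¹ * ∑ i : Fin (n+1), φ i t) • e := by
        rw [hbdef, lp.coeFn_sum, Finset.sum_apply]
        have hterm : ∀ i ∈ Finset.univ, ((((n:ℝ)+1)⁻¹ • hh i)) t
            = ((((n:ℝ)+1)⁻¹ * φ i t)) • e := by
          intro i _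
          rw [lp.coeFn_smul, Pi.smul_apply, happly, smul_smul]
        rw [Finset.sum_congr rfl hterm, ← Finset.sum_smul, ← Finset.mul_sum]
      rw [happb, norm_smul]
      have hsum0 : 0 ≤ ∑ i : Fin (n+1), φ i t := Finset.sum_nonneg fun i _ => (hφicc i t).1
      have hsum1 : (∑ i : Fin (n+1), φ i t) ≤ 1 := by
        by_cases hex : ∃ i, t ∈ W i
        · obtain ⟨i₀, hi₀⟩ := hex
          have hsgl : ∑ i : Fin (n+1), φ i t = φ i₀ t := by
            refine Finset.sum_eq_single i₀ (fun i _ hne => ?_) (fun h => absurd (Finset.mem_univ i₀) h)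
            have hti : t ∉ W i := fun hti => Set.disjoint_left.mp (hWd i i₀ hne) hti hi₀
            simpa using hφ0 i hti
          rw [hsgl]; exact (hφicc i₀ t).2
        · push_neg at hex
          have hz : ∀ i ∈ Finset.univ, φ i t = (0:ℝ) := fun i _ => by simpa using hφ0 i (hex i)
          rw [Finset.sum_eq_zero hz]; norm_num
      rw [Real.norm_of_nonneg (by positivity)]
      calc (((n:ℝ)+1)⁻¹ * ∑ i : Fin (n+1), φ i t) * ‖e‖
          ≤ (((n:ℝ)+1)⁻¹ * 1) * 2 := by
            have hnn : (0:ℝ) ≤ ((n:ℝ)+1)⁻¹ := by positivity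
            apply mul_le_mul _ hele (norm_nonneg e) (by positivity)
            exact mul_le_mul_of_nonneg_left hsum1 hnn
        _ = ((n:ℝ)+1)⁻¹ * 2 := by ring
    have hbn : ‖b‖ ≤ ((n:ℝ)+1)⁻¹ * 2 := lp.norm_le_of_forall_le (by positivity) hball
    have hnpos : (0:ℝ) < (n:ℝ)+1 := by positivity
    have hnlt : 2/δ < (n:ℝ)+1 := hn.trans (by linarith)
    have h2δ : ((n:ℝ)+1)⁻¹ * 2 < δ := by
      rw [inv_mul_eq_div, div_lt_iff₀ hnpos]
      calc (2:ℝ) = (2/δ) * δ := by field_simp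
        _ < ((n:ℝ)+1) * δ := mul_lt_mul_of_pos_right hnlt hδ
        _ = δ * ((n:ℝ)+1) := by ring
    exact lt_of_le_of_lt hbn h2δ
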